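/- With notation as in the previous statement, |η_{k+1} - P(y_{k+1} = 1 | Σ = s)| summed against the distribution of Σ equals η_{k+1}(1-η_{k+1})·∑_{s=0}^{k+1} |P(Z_k = s) - P(Z_k = s-1)|. -/

import Mathlib

open MeasureTheory ProbabilityTheory

lemma key_real (e p1 p0 : ℝ) (he0 : 0 ≤ e) (he1 : e ≤ 1) (hp1 : 0 ≤ p1) (hp0 : 0 ≤ p0) :
    (p1 * (1 - e) + p0 * e) * |e - (p0 * e) / (p1 * (1 - e) + p0 * e)|
      = e * (1 - e) * |p1 - p0| := by
  set q := p1 * (1 - e) + p0 * e with hq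
  have hee : (0:ℝ) ≤ e * (1 - e) := by nlinarith
  have hqn : (0:ℝ) ≤ q :=
    add_nonneg (mul_nonneg hp1 (by linarith)) (mul_nonneg hp0 he0)
  rcases eq_or_lt_of_le hqn with h | h
  · have h1 : p1 * (1 - e) = 0 ∧ p0 * e = 0 := by
      constructor <;> nlinarith [mul_nonneg hp1 (sub_nonneg.mpr he1), mul_nonneg hp0 he0]
    have e1 : e * (1 - e) * p1 = 0 := by nlinarith [h1.1]
    have e2 : e * (1 - e) * p0 = 0 := by nlinarith [h1.2]
    have hr : e * (1 - e) * |p1 - p0| = |e * (1 - e) * p1 - e * (1 - e) * p0| := by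
      rw [← mul_sub, abs_mul, abs_of_nonneg hee]
    rw [← h, hr, e1, e2]
    simp
  · have hq0 : q ≠ 0 := ne_of_gt h
    have h2 : q * |e - p0 * e / q| = |q * e - p0 * e| := by
      rw [show e - p0 * e / q = (q * e - p0 * e) / q by field_simp, abs_div,
        abs_of_pos h, mul_comm, div_mul_cancel₀ _ hq0]
    rw [h2, show q * e - p0 * e = e * (1 - e) * (p1 - p0) by rw [hq]; ring,
      abs_mul, abs_of_nonneg hee]

/-- With `Σ = ∑_{i=1}^{k+1} yᵢ` a sum of independent Bernoulli(ηᵢ) variables and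
`Z_k = ∑_{j=1}^k y_j`, the expectation over `Σ` of `|η_{k+1} - P(y_{k+1}=1 | Σ)|`
equals `η_{k+1}(1-η_{k+1}) ∑_{s=0}^{k+1} |P(Z_k = s) - P(Z_k = s-1)|`. -/
theorem stmt_16 {Ω : Type*} [MeasurableSpace Ω] (μ : Measure Ω) [IsProbabilityMeasure μ]
    (k : ℕ) (η : Fin (k + 1) → ℝ) (hη : ∀ i, η i ∈ Set.Icc (0:ℝ) 1)
    (y : Fin (k + 1) → Ω → ℕ)
    (hmeas : ∀ i, Measurable (y i)) (hval : ∀ i ω, y i ω ≤ 1)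
    (hind : iIndepFun y μ)
    (hbern : ∀ i, μ {ω | y i ω = 1} = ENNReal.ofReal (η i)) :
    ∑ s ∈ Finset.range (k + 2),
        (μ {ω | ∑ i, y i ω = s}).toReal *
          |η (Fin.last k) -
            (μ ({ω | y (Fin.last k) ω = 1} ∩ {ω | ∑ i, y i ω = s})).toReal /
              (μ {ω | ∑ i, y i ω = s}).toReal|
      = η (Fin.last k) * (1 - η (Fin.last k)) *
          ∑ s ∈ Finset.range (k + 2),
            |(μ {ω | ∑ i : Fin k, y i.castSucc ω = s}).toReal -
              (μ {ω | ((∑ i : Fin k, y i.castSucc ω : ℕ) : ℤ) = (s : ℤ) - 1}).toReal| := by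
  obtain ⟨hη0, hη1⟩ := hη (Fin.last k)
  have hmeasY : Measurable (y (Fin.last k)) := hmeas _
  have hmeasZ : Measurable (fun ω => ∑ i : Fin k, y i.castSucc ω) :=
    Finset.measurable_sum _ (fun i _ => hmeas _)
  have hsum : ∀ ω, (∑ i, y i ω) = (∑ i : Fin k, y i.castSucc ω) + y (Fin.last k) ω :=
    fun ω => Fin.sum_univ_castSucc (fun i => y i ω)
  have hZfun : (fun ω => ∑ i : Fin k, y i.castSucc ω)
      = ∑ j ∈ Finset.univ.erase (Fin.last k), y j := by
    funext ω
    have h1 : (∑ j ∈ Finset.univ.erase (Fin.last k), y j ω) + y (Fin.last k) ω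
        = ∑ j, y j ω := Finset.sum_erase_add _ _ (Finset.mem_univ _)
    have h2 := hsum ω
    simp only [Finset.sum_apply]
    omega
  have hindepZY : IndepFun (fun ω => ∑ i : Fin k, y i.castSucc ω) (y (Fin.last k)) μ := by
    rw [hZfun]
    exact hind.indepFun_finsetSum_of_notMem hmeas (Finset.notMem_erase _ _)
  have hmul : ∀ s j : ℕ, μ ({ω | (∑ i : Fin k, y i.castSucc ω) = s} ∩ {ω | y (Fin.last k) ω = j})
      = μ {ω | (∑ i : Fin k, y i.castSucc ω) = s} * μ {ω | y (Fin.last k) ω = j} := fun s j =>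
    hindepZY.measure_inter_preimage_eq_mul {s} {j} (measurableSet_singleton _)
      (measurableSet_singleton _)
  have hmeasY1 : MeasurableSet {ω | y (Fin.last k) ω = 1} := hmeasY (measurableSet_singleton 1)
  have hY1 : μ {ω | y (Fin.last k) ω = 1} = ENNReal.ofReal (η (Fin.last k)) := hbern _
  have hY0set : {ω | y (Fin.last k) ω = 0} = {ω | y (Fin.last k) ω = 1}ᶜ := by
    ext ω
    have := hval (Fin.last k) ω
    simp only [Set.mem_setOf_eq, Set.mem_compl_iff]
    omega
  have htY1 : (μ {ω | y (Fin.last k) ω = 1}).toReal = η (Fin.last k) := by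
    rw [hY1, ENNReal.toReal_ofReal hη0]
  have htY0 : (μ {ω | y (Fin.last k) ω = 0}).toReal = 1 - η (Fin.last k) := by
    rw [hY0set, measure_compl hmeasY1 (measure_ne_top μ _), measure_univ, hY1,
      ENNReal.toReal_sub_of_le (ENNReal.ofReal_le_one.mpr hη1) ENNReal.one_ne_top,
      ENNReal.toReal_one, ENNReal.toReal_ofReal hη0]
  rw [Finset.mul_sum]
  apply Finset.sum_congr rfl
  intro s _
  rcases s with _ | t
  · -- s = 0
    have hS0 : {ω | (∑ i, y i ω) = 0}
        = {ω | (∑ i : Fin k, y i.castSucc ω) = 0} ∩ {ω | y (Fin.last k) ω = 0} := by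
      ext ω
      simp only [Set.mem_setOf_eq, Set.mem_inter_iff, hsum ω]
      omega
    have hN : {ω | y (Fin.last k) ω = 1} ∩ {ω | (∑ i, y i ω) = 0} = (∅ : Set Ω) := by
      ext ω
      simp only [Set.mem_setOf_eq, Set.mem_inter_iff, Set.mem_empty_iff_false, iff_false,
        not_and, hsum ω]
      omega
    have hI : {ω | ((∑ i : Fin k, y i.castSucc ω : ℕ) : ℤ) = ((0:ℕ) : ℤ) - 1} = (∅ : Set Ω) := by
      ext ω
      simp only [Set.mem_setOf_eq, Set.mem_empty_iff_false, iff_false]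
      omega
    rw [hN, hI, hS0, hmul 0 0, measure_empty]
    simp only [ENNReal.toReal_zero, ENNReal.toReal_mul, htY0, sub_zero, zero_div]
    rw [abs_of_nonneg hη0, abs_of_nonneg ENNReal.toReal_nonneg]
    ring
  · -- s = t + 1
    have hA : {ω | (∑ i, y i ω) = t + 1}
        = ({ω | (∑ i : Fin k, y i.castSucc ω) = t + 1} ∩ {ω | y (Fin.last k) ω = 0})
          ∪ ({ω | (∑ i : Fin k, y i.castSucc ω) = t} ∩ {ω | y (Fin.last k) ω = 1}) := by
      ext ω
      have := hval (Fin.last k) ω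
      simp only [Set.mem_setOf_eq, Set.mem_inter_iff, Set.mem_union, hsum ω]
      omega
    have hdisj : Disjoint
        ({ω | (∑ i : Fin k, y i.castSucc ω) = t + 1} ∩ {ω | y (Fin.last k) ω = 0})
        ({ω | (∑ i : Fin k, y i.castSucc ω) = t} ∩ {ω | y (Fin.last k) ω = 1}) := by
      rw [Set.disjoint_left]
      rintro ω ⟨_, h0⟩ ⟨_, h1⟩
      simp only [Set.mem_setOf_eq] at h0 h1
      omega
    have hq : μ {ω | (∑ i, y i ω) = t + 1}
        = μ {ω | (∑ i : Fin k, y i.castSucc ω) = t + 1} * μ {ω | y (Fin.last k) ω = 0}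
          + μ {ω | (∑ i : Fin k, y i.castSucc ω) = t} * μ {ω | y (Fin.last k) ω = 1} := by
      rw [hA, measure_union hdisj
        ((hmeasZ (measurableSet_singleton t)).inter hmeasY1), hmul, hmul]
    have ha : {ω | y (Fin.last k) ω = 1} ∩ {ω | (∑ i, y i ω) = t + 1}
        = {ω | (∑ i : Fin k, y i.castSucc ω) = t} ∩ {ω | y (Fin.last k) ω = 1} := by
      ext ω
      simp only [Set.mem_setOf_eq, Set.mem_inter_iff, hsum ω]
      omega
    have hZint : {ω | ((∑ i : Fin k, y i.castSucc ω : ℕ) : ℤ) = ((t + 1 : ℕ) : ℤ) - 1}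
        = {ω | (∑ i : Fin k, y i.castSucc ω) = t} := by
      ext ω
      simp only [Set.mem_setOf_eq]
      omega
    rw [hq, ha, hZint, hmul,
      ENNReal.toReal_add (by finiteness) (by finiteness)]
    simp only [ENNReal.toReal_mul]
    rw [htY0, htY1]
    exact key_real (η (Fin.last k)) (μ {ω | (∑ i : Fin k, y i.castSucc ω) = t + 1}).toReal
      (μ {ω | (∑ i : Fin k, y i.castSucc ω) = t}).toReal hη0 hη1
      ENNReal.toReal_nonneg ENNReal.toReal_nonneg
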